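/- For any probability distribution F on the real line having a finite (1+ε)-th absolute moment for some ε > 0 (i.e., ∫ |x|^{1+ε} dF(x) < ∞), and for any a > 0 and any b > μ(F), there exists a probability distribution F' on the real line, also having a finite (1+ε')-th absolute moment for some ε' > 0, such that the Kullback–Leibler divergence D(F, F') ≤ a and the mean of F' satisfies μ(F') ≥ b. -/

import Mathlib

open MeasureTheory Real Classical
open scoped ENNReal

/-- Kullback–Leibler divergence between measures on ℝ, as an extended real:
`∫ log(dF/dF') dF` when `F ≪ F'`, and `⊤` otherwise. -/
noncomputable def klDivergence (F F' : Measure ℝ) : EReal :=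
  if F ≪ F' then ((∫ x, Real.log (F.rnDeriv F' x).toReal ∂F : ℝ) : EReal) else ⊤

/-- A probability distribution `F` on ℝ belongs to the class `G` if it has a
finite `(1+ε)`-th absolute moment for some `ε > 0`. -/
def HasFiniteMomentG (F : Measure ℝ) : Prop :=
  ∃ ε : ℝ, 0 < ε ∧ Integrable (fun x => |x| ^ (1 + ε)) F

lemma integrable_dirac'' {f : ℝ → ℝ} (hf : Measurable f) (c : ℝ) :
    Integrable f (Measure.dirac c) := by
  refine ⟨hf.aestronglyMeasurable, ?_⟩
  simp only [HasFiniteIntegral, lintegral_dirac]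
  exact ENNReal.coe_lt_top

theorem classG_perturbation_exists
    (F : Measure ℝ) [IsProbabilityMeasure F]
    (hF : HasFiniteMomentG F)
    (a b : ℝ) (ha : 0 < a) (hb : (∫ x, x ∂F) < b) :
    ∃ F' : Measure ℝ, IsProbabilityMeasure F' ∧ HasFiniteMomentG F' ∧
      klDivergence F F' ≤ (a : EReal) ∧ b ≤ ∫ x, x ∂F' := by
  obtain ⟨ε, hε, hmom⟩ := hF
  set μ : ℝ := ∫ x, x ∂F with hμ
  set t : ℝ := 1 - Real.exp (-a) with ht
  have hexp1 : Real.exp (-a) < 1 := Real.exp_lt_one_iff.mpr (by linarith)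
  have ht0 : 0 < t := by simp only [ht]; linarith
  set c : ℝ := (b - Real.exp (-a) * μ) / t with hc
  set r : ℝ≥0∞ := ENNReal.ofReal (Real.exp (-a)) with hr
  set s : ℝ≥0∞ := ENNReal.ofReal t with hs
  have hr_top : r ≠ ⊤ := ENNReal.ofReal_ne_top
  have hs_top : s ≠ ⊤ := ENNReal.ofReal_ne_top
  set F' : Measure ℝ := r • F + s • Measure.dirac c with hF'
  have hprob : IsProbabilityMeasure F' := by
    constructor
    simp only [hF', Measure.add_apply, Measure.smul_apply, smul_eq_mul,
      measure_univ, mul_one]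
    rw [hr, hs, ← ENNReal.ofReal_add (Real.exp_pos _).le ht0.le]
    simp [ht]
  -- integrability of id w.r.t. F
  have habs_le : ∀ x : ℝ, ‖x‖ ≤ ‖1 + |x| ^ (1 + ε)‖ := by
    intro x
    have h0 : (0:ℝ) ≤ |x| ^ (1 + ε) := Real.rpow_nonneg (abs_nonneg x) _
    rw [Real.norm_eq_abs x, Real.norm_of_nonneg (by linarith)]
    rcases le_or_gt (|x|) 1 with h | h
    · linarith
    · have h2 : |x| ^ (1:ℝ) ≤ |x| ^ (1 + ε) :=
        Real.rpow_le_rpow_of_exponent_le h.le (by linarith)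
      rw [Real.rpow_one] at h2; linarith
  have hid : Integrable (fun x : ℝ => x) F := by
    refine Integrable.mono ((integrable_const (1:ℝ)).add hmom)
      measurable_id.aestronglyMeasurable ?_
    exact Filter.Eventually.of_forall habs_le
  have hmeas_f : Measurable fun x : ℝ => |x| ^ (1 + ε) := by fun_prop
  -- moment of F'
  have hmomF' : HasFiniteMomentG F' := by
    refine ⟨ε, hε, ?_⟩
    rw [hF', integrable_add_measure]
    exact ⟨hmom.smul_measure hr_top, (integrable_dirac'' hmeas_f c).smul_measure hs_top⟩
  -- mean of F'
  have hmean : ∫ x, x ∂F' = b := by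
    rw [hF', integral_add_measure (hid.smul_measure hr_top)
      ((integrable_dirac'' measurable_id c).smul_measure hs_top),
      integral_smul_measure, integral_smul_measure, integral_dirac]
    rw [hr, hs, ENNReal.toReal_ofReal (Real.exp_pos _).le, ENNReal.toReal_ofReal ht0.le]
    rw [smul_eq_mul, smul_eq_mul, hc, mul_div_cancel₀ _ ht0.ne', ← hμ]
    ring
  set e : ℝ≥0∞ := ENNReal.ofReal (Real.exp a) with he
  have he0 : e ≠ 0 := (ENNReal.ofReal_pos.mpr (Real.exp_pos a)).ne'
  have he_top : e ≠ ⊤ := ENNReal.ofReal_ne_top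
  have her : e * r = 1 := by
    rw [he, hr, ← ENNReal.ofReal_mul (Real.exp_pos a).le, ← Real.exp_add]
    simp
  have hle : F ≤ e • F' := by
    have heq : e • F' = F + (e * s) • Measure.dirac c := by
      rw [hF', smul_add, smul_smul, smul_smul, her, one_smul]
    rw [heq]
    exact Measure.le_add_right le_rfl
  have habs : F ≪ F' :=
    (Measure.absolutelyContinuous_of_le hle).trans Measure.smul_absolutelyContinuous
  haveI : IsFiniteMeasure (e • F') := by
    constructor
    rw [Measure.smul_apply, measure_univ, smul_eq_mul, mul_one]
    exact Ne.lt_top he_top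
  have h1 : F.rnDeriv (e • F') ≤ᵐ[e • F'] 1 := Measure.rnDeriv_le_one_of_le hle
  have h1' : F.rnDeriv (e • F') ≤ᵐ[F'] 1 := (Measure.ae_ennreal_smul_measure_iff he0).mp h1
  have h2 : F.rnDeriv (e • F') =ᵐ[F'] e⁻¹ • F.rnDeriv F' :=
    Measure.rnDeriv_smul_right_of_ne_top F F' he0 he_top
  have hbound : ∀ᵐ x ∂F, F.rnDeriv F' x ≤ e := by
    have hF'ae : ∀ᵐ x ∂F', F.rnDeriv F' x ≤ e := by
      filter_upwards [h1', h2] with x hx hx2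
      rw [hx2] at hx
      simp only [Pi.smul_apply, smul_eq_mul, Pi.one_apply] at hx
      calc F.rnDeriv F' x = e * (e⁻¹ * F.rnDeriv F' x) := by
            rw [← mul_assoc, ENNReal.mul_inv_cancel he0 he_top, one_mul]
        _ ≤ e * 1 := mul_le_mul_right hx _
        _ = e := mul_one e
    exact habs.ae_le hF'ae
  have hlog : ∀ᵐ x ∂F, Real.log ((F.rnDeriv F' x).toReal) ≤ a := by
    filter_upwards [hbound] with x hx
    have hx' : (F.rnDeriv F' x).toReal ≤ Real.exp a :=
      ENNReal.toReal_le_of_le_ofReal (Real.exp_pos a).le hx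
    rcases eq_or_lt_of_le (ENNReal.toReal_nonneg : (0:ℝ) ≤ (F.rnDeriv F' x).toReal)
      with h0 | h0
    · rw [← h0, Real.log_zero]; exact ha.le
    · exact (Real.log_le_iff_le_exp h0).mpr hx'
  have hkl : klDivergence F F' ≤ (a : EReal) := by
    rw [klDivergence, if_pos habs]
    rw [EReal.coe_le_coe_iff]
    by_cases hInt : Integrable (fun x => Real.log ((F.rnDeriv F' x).toReal)) F
    · calc ∫ x, Real.log ((F.rnDeriv F' x).toReal) ∂F
          ≤ ∫ _, a ∂F := integral_mono_ae hInt (integrable_const a) hlog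
        _ = a := by simp
    · rw [integral_undef hInt]; exact ha.le
  exact ⟨F', hprob, hmomF', hkl, hmean.ge⟩
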